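/- With the notation of the associated Euler totient function: if F is a polynomial Euler product of degree d with |α_j(p)| ≤ 1, then the Dirichlet series ∑_{n≥1} φ(n,F)/n^s converges absolutely for Re(s) > 2, and in that half-plane ∑_{n≥1} φ(n,F)/n^s = ζ(s-1) · ∑_{n≥1} α(n)/n^s. -/

import Mathlib

open ArithmeticFunction

open scoped LSeries.notation

/-- If each `z i` has norm at most `r ≤ 1`, then `∏ (1 - z i)` is within
`card * 2^card * r` of `1`. -/
lemma aux_norm_prod_one_sub {ι : Type*} (S : Finset ι) (z : ι → ℂ) {r : ℝ} (hr1 : r ≤ 1)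
    (hr0 : 0 ≤ r) (hz : ∀ i ∈ S, ‖z i‖ ≤ r) :
    ‖∏ i ∈ S, (1 - z i) - 1‖ ≤ S.card * 2 ^ S.card * r := by
  classical
  induction S using Finset.cons_induction with
  | empty => simp
  | cons i S hi ih =>
    have hzi : ‖z i‖ ≤ r := hz i (Finset.mem_cons_self i S)
    have hP : ‖∏ j ∈ S, (1 - z j)‖ ≤ 2 ^ S.card := by
      rw [norm_prod]
      calc ∏ j ∈ S, ‖1 - z j‖ ≤ ∏ j ∈ S, 2 := by
            refine Finset.prod_le_prod (fun j _ => norm_nonneg _) (fun j hj => ?_)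
            calc ‖1 - z j‖ ≤ ‖(1 : ℂ)‖ + ‖z j‖ := norm_sub_le _ _
              _ ≤ 1 + r := by
                  have := hz j (Finset.mem_cons_of_mem hj)
                  simp only [norm_one]
                  linarith
              _ ≤ 2 := by linarith
        _ = 2 ^ S.card := by rw [Finset.prod_const]
    have ih' := ih (fun j hj => hz j (Finset.mem_cons_of_mem hj))
    have key : (∏ j ∈ Finset.cons i S hi, (1 - z j)) - 1
        = ((∏ j ∈ S, (1 - z j)) - 1) - z i * ∏ j ∈ S, (1 - z j) := by
      rw [Finset.prod_cons]; ring
    rw [key]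
    calc ‖((∏ j ∈ S, (1 - z j)) - 1) - z i * ∏ j ∈ S, (1 - z j)‖
        ≤ ‖(∏ j ∈ S, (1 - z j)) - 1‖ + ‖z i * ∏ j ∈ S, (1 - z j)‖ := norm_sub_le _ _
      _ ≤ S.card * 2 ^ S.card * r + r * 2 ^ S.card := by
          have h2 : ‖z i * ∏ j ∈ S, (1 - z j)‖ ≤ r * 2 ^ S.card := by
            calc ‖z i * ∏ j ∈ S, (1 - z j)‖ = ‖z i‖ * ‖∏ j ∈ S, (1 - z j)‖ := norm_mul _ _
              _ ≤ r * 2 ^ S.card := mul_le_mul hzi hP (norm_nonneg _) hr0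
          linarith
      _ ≤ (Finset.cons i S hi).card * 2 ^ (Finset.cons i S hi).card * r := by
          rw [Finset.card_cons]
          have h2S : (0:ℝ) < 2 ^ S.card := by positivity
          have hcard : (0:ℝ) ≤ S.card := Nat.cast_nonneg _
          rw [pow_succ]
          push_cast
          nlinarith [mul_nonneg hr0 h2S.le, mul_nonneg (mul_nonneg hcard hr0) h2S.le]

/-- The Dirichlet series `∑ φ(n,F)/n^s` converges absolutely for `Re(s) > 2`
and there equals `ζ(s-1) · ∑ α(n)/n^s`. -/
theorem assoc_totient_dirichlet_series
    (d : ℕ) (a : ℕ → Fin d → ℂ)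
    (ha : ∀ p : ℕ, p.Prime → ∀ j : Fin d, ‖a p j‖ ≤ 1)
    (Fpinv : ℕ → ℂ) (hFpinv : ∀ p : ℕ, Fpinv p = ∏ j : Fin d, (1 - a p j / p))
    (γ : ℕ → ℂ) (hγ : ∀ p : ℕ, γ p = p * (1 - Fpinv p))
    (α : ℕ → ℂ) (hα : ∀ n : ℕ, α n = (moebius n : ℂ) * ∏ p ∈ n.primeFactors, γ p)
    (φF : ℕ → ℂ) (hφF : ∀ n : ℕ, φF n = n * ∏ p ∈ n.primeFactors, Fpinv p) :
    ∀ s : ℂ, 2 < s.re →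
      Summable (fun n : ℕ => ‖φF n / (n : ℂ) ^ s‖) ∧
      ∑' n : ℕ, φF n / (n : ℂ) ^ s
        = riemannZeta (s - 1) * ∑' n : ℕ, α n / (n : ℂ) ^ s := by
  classical
  intro s hs
  -- uniform bound on γ at primes
  set B : ℝ := d * 2 ^ d + 1 with hB
  have hB1 : (1:ℝ) ≤ B := by
    have : (0:ℝ) ≤ d * 2 ^ d := by positivity
    linarith
  have hγbound : ∀ p : ℕ, p.Prime → ‖γ p‖ ≤ B := by
    intro p hp
    have hp0 : (0:ℝ) < (p:ℝ) := by exact_mod_cast hp.pos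
    have hp1 : (1:ℝ) ≤ (p:ℝ) := by exact_mod_cast hp.one_lt.le
    have hr1 : (1:ℝ) / p ≤ 1 := by
      rw [div_le_one hp0]; exact hp1
    have hz : ∀ j ∈ (Finset.univ : Finset (Fin d)), ‖a p j / (p:ℂ)‖ ≤ 1 / (p:ℝ) := by
      intro j _
      rw [norm_div]
      have hnp : ‖(p:ℂ)‖ = (p:ℝ) := by simp
      rw [hnp]
      gcongr
      exact ha p hp j
    have hmain := aux_norm_prod_one_sub (Finset.univ : Finset (Fin d))
      (fun j => a p j / (p:ℂ)) hr1 (by positivity) hz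
    rw [Finset.card_univ, Fintype.card_fin] at hmain
    have h1 : ‖γ p‖ = (p:ℝ) * ‖1 - Fpinv p‖ := by
      rw [hγ p, norm_mul]
      simp
    have h2 : ‖1 - Fpinv p‖ ≤ d * 2 ^ d * (1 / p) := by
      rw [hFpinv p, norm_sub_rev]
      exact hmain
    calc ‖γ p‖ ≤ (p:ℝ) * (d * 2 ^ d * (1 / p)) := by
          rw [h1]; exact mul_le_mul_of_nonneg_left h2 hp0.le
      _ = d * 2 ^ d * ((p:ℝ) / p) := by ring
      _ = d * 2 ^ d := by rw [div_self hp0.ne', mul_one]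
      _ ≤ B := by linarith
  have hB0 : (0:ℝ) ≤ B := by linarith
  set M : ℕ := ⌈B⌉₊ with hM
  set K : ℝ := B ^ (M + 1) with hK
  -- bound on α
  have hαbound : ∀ n : ℕ, n ≠ 0 → ‖α n‖ ≤ K * n := by
    intro n hn
    have hn0 : (0:ℝ) < (n:ℝ) := by exact_mod_cast Nat.pos_of_ne_zero hn
    rw [hα n, norm_mul]
    have hμ : ‖((moebius n : ℤ) : ℂ)‖ ≤ 1 := by
      have hcases : moebius n = 0 ∨ moebius n = 1 ∨ moebius n = -1 := by
        rcases eq_or_ne (moebius n) 0 with h | h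
        · exact Or.inl h
        · exact Or.inr (moebius_ne_zero_iff_eq_or.mp h)
      rcases hcases with h | h | h <;> simp [h]
    have hγnorm : ∀ p ∈ n.primeFactors, ‖γ p‖ ≤ B :=
      fun p hp => hγbound p (Nat.prime_of_mem_primeFactors hp)
    have hprodnorm : ‖∏ p ∈ n.primeFactors, γ p‖ ≤ K * n := by
      rw [norm_prod]
      set P := n.primeFactors with hP
      have hsplit : (∏ p ∈ P with p ≤ M, ‖γ p‖) * ∏ p ∈ P with ¬ p ≤ M, ‖γ p‖
          = ∏ p ∈ P, ‖γ p‖ := Finset.prod_filter_mul_prod_filter_not P (· ≤ M) _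
      have hsmall : (∏ p ∈ P with p ≤ M, ‖γ p‖) ≤ K := by
        calc (∏ p ∈ P with p ≤ M, ‖γ p‖) ≤ ∏ p ∈ P with p ≤ M, B :=
              Finset.prod_le_prod (fun p _ => norm_nonneg _)
                (fun p hp => hγnorm p (Finset.mem_filter.mp hp).1)
          _ = B ^ (P.filter (· ≤ M)).card := Finset.prod_const B
          _ ≤ B ^ (M + 1) := by
              apply pow_le_pow_right₀ hB1
              have hsub : P.filter (· ≤ M) ⊆ Finset.range (M + 1) := by
                intro p hp
                exact Finset.mem_range.mpr (Nat.lt_succ_of_le (Finset.mem_filter.mp hp).2)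
              simpa using Finset.card_le_card hsub
      have hlarge : (∏ p ∈ P with ¬ p ≤ M, ‖γ p‖) ≤ (n:ℝ) := by
        calc (∏ p ∈ P with ¬ p ≤ M, ‖γ p‖) ≤ ∏ p ∈ P with ¬ p ≤ M, (p:ℝ) := by
              refine Finset.prod_le_prod (fun p _ => norm_nonneg _) (fun p hp => ?_)
                
              have hpmem := (Finset.mem_filter.mp hp)
              have hpM : M < p := Nat.lt_of_not_le hpmem.2
              have hBp : B ≤ (p:ℝ) := by
                calc B ≤ (M:ℝ) := Nat.le_ceil B
                  _ ≤ (p:ℝ) := by exact_mod_cast hpM.le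
              exact (hγnorm p hpmem.1).trans hBp
          _ = ((∏ p ∈ P with ¬ p ≤ M, p : ℕ) : ℝ) := by rw [Nat.cast_prod]
          _ ≤ (n:ℝ) := by
              have hdvd : (∏ p ∈ P with ¬ p ≤ M, p) ∣ n := by
                refine dvd_trans ?_ (Nat.prod_primeFactors_dvd n)
                exact Finset.prod_dvd_prod_of_subset _ _ _ (Finset.filter_subset _ _)
              exact_mod_cast Nat.le_of_dvd (Nat.pos_of_ne_zero hn) hdvd
      calc ∏ p ∈ P, ‖γ p‖ = (∏ p ∈ P with p ≤ M, ‖γ p‖) * ∏ p ∈ P with ¬ p ≤ M, ‖γ p‖ :=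
            hsplit.symm
        _ ≤ K * n := by
            apply mul_le_mul hsmall hlarge (Finset.prod_nonneg fun p _ => norm_nonneg _)
            rw [hK]; positivity
    calc ‖((moebius n : ℤ) : ℂ)‖ * ‖∏ p ∈ n.primeFactors, γ p‖
        ≤ 1 * (K * n) := by
          apply mul_le_mul hμ hprodnorm (norm_nonneg _) zero_le_one
      _ = K * n := one_mul _
  -- summability of the two factors
  have hsumα : LSeriesSummable α s := by
    refine LSeriesSummable_of_le_const_mul_rpow (x := 2) hs ⟨K, fun n hn => ?_⟩
    rw [show (2:ℝ) - 1 = 1 by norm_num, Real.rpow_one]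
    exact hαbound n hn
  have hsumid : LSeriesSummable (fun n : ℕ => (n:ℂ)) s := by
    refine LSeriesSummable_of_le_const_mul_rpow (x := 2) hs ⟨1, fun n hn => ?_⟩
    rw [show (2:ℝ) - 1 = 1 by norm_num, Real.rpow_one, one_mul]
    simp
  -- basic values
  have hφF0 : φF 0 = 0 := by rw [hφF 0]; simp
  have hα0 : α 0 = 0 := by rw [hα 0]; simp
  -- the key convolution identity
  have hkey : ∀ n : ℕ, φF n = ((fun k : ℕ => (k:ℂ)) ⍟ α) n := by
    intro n
    rcases eq_or_ne n 0 with rfl | hn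
    · simp [hφF0]
    rw [LSeries.convolution_def]
    simp only []
    rw [Nat.sum_divisorsAntidiagonal' (f := fun x y => (x:ℂ) * α y)]
    rw [← Finset.sum_filter_of_ne (p := fun d => Squarefree d)
      (fun x _ hx => by
        by_contra hsq
        apply hx
        rw [hα x, moebius_eq_zero_of_not_squarefree hsq]
        simp)]
    rw [Nat.sum_divisors_filter_squarefree hn, Nat.factors_eq]
    simp only [List.toFinset_coe, Nat.toFinset_factors]
    rw [hφF n]
    have hFp : ∀ p ∈ n.primeFactors, Fpinv p = -(γ p) / p + 1 := by
      intro p hp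
      have hp' := Nat.prime_of_mem_primeFactors hp
      have hp0 : (p:ℂ) ≠ 0 := Nat.cast_ne_zero.mpr hp'.pos.ne'
      rw [hγ p]
      field_simp
      ring
    rw [Finset.prod_congr rfl hFp, Finset.prod_add, Finset.mul_sum]
    refine Finset.sum_congr rfl (fun t ht => ?_)
    have hsub : t ⊆ n.primeFactors := Finset.mem_powerset.mp ht
    have hprimes : ∀ p ∈ t, p.Prime := fun p hp => Nat.prime_of_mem_primeFactors (hsub hp)
    rw [Finset.prod_val, Function.id_def]
    set dt : ℕ := ∏ p ∈ t, p with hdt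
    have hdtpos : 0 < dt := Finset.prod_pos (fun p hp => (hprimes p hp).pos)
    have hdt0 : (dt:ℂ) ≠ 0 := Nat.cast_ne_zero.mpr hdtpos.ne'
    have hdvd : dt ∣ n :=
      dvd_trans (Finset.prod_dvd_prod_of_subset _ _ _ hsub) (Nat.prod_primeFactors_dvd n)
    have hαdt : α dt = (-1 : ℂ) ^ t.card * ∏ p ∈ t, γ p := by
      rw [hα dt]
      have hpf : dt.primeFactors = t := Nat.primeFactors_prod hprimes
      have hμ : moebius dt = ∏ p ∈ t, moebius p :=
        isMultiplicative_moebius.map_prod_of_prime t hprimes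
      have hμ' : moebius dt = (-1 : ℤ) ^ t.card := by
        rw [hμ, Finset.prod_congr rfl (fun p hp => moebius_apply_prime (hprimes p hp)),
          Finset.prod_const]
      rw [hpf, hμ']
      push_cast
      ring
    have hcast : ((n / dt : ℕ) : ℂ) = (n:ℂ) / (dt:ℂ) := Nat.cast_div hdvd hdt0
    have hprodneg : ∏ p ∈ t, (-(γ p) / (p:ℂ)) = ((-1:ℂ) ^ t.card * ∏ p ∈ t, γ p) / dt := by
      rw [Finset.prod_div_distrib]
      congr 1
      · rw [show (fun p => -(γ p)) = fun p => (-1 : ℂ) * γ p from funext fun p => by ring]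
        rw [Finset.prod_mul_distrib, Finset.prod_const]
      · rw [hdt]; push_cast; rfl
    rw [Finset.prod_const_one, mul_one, hαdt, hcast, hprodneg]
    ring
  -- assemble
  have hφeq : φF = (fun k : ℕ => (k:ℂ)) ⍟ α := funext hkey
  have hsumφ : LSeriesSummable φF s := by
    rw [hφeq]; exact hsumid.convolution hsumα
  have hterm : ∀ f : ℕ → ℂ, f 0 = 0 → ∀ n : ℕ, LSeries.term f s n = f n / (n:ℂ) ^ s := by
    intro f h0 n
    rcases eq_or_ne n 0 with rfl | hn
    · simp [h0]
    · exact LSeries.term_of_ne_zero hn f s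
  constructor
  · have h1 : Summable (fun n => ‖LSeries.term φF s n‖) := summable_norm_iff.mpr hsumφ
    exact h1.congr (fun n => by rw [hterm φF hφF0 n])
  · have e1 : ∑' n : ℕ, φF n / (n:ℂ) ^ s = LSeries φF s :=
      tsum_congr fun n => (hterm φF hφF0 n).symm
    have e3 : LSeries α s = ∑' n : ℕ, α n / (n:ℂ) ^ s :=
      tsum_congr fun n => hterm α hα0 n
    have e2 : LSeries (fun k : ℕ => (k:ℂ)) s = riemannZeta (s - 1) := by
      have hs1 : 1 < (s - 1).re := by
        rw [Complex.sub_re, Complex.one_re]; linarith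
      rw [← LSeries_one_eq_riemannZeta hs1]
      refine tsum_congr fun n => ?_
      rcases eq_or_ne n 0 with rfl | hn
      · simp
      · rw [LSeries.term_of_ne_zero hn, LSeries.term_of_ne_zero hn]
        have hn' : (n:ℂ) ≠ 0 := Nat.cast_ne_zero.mpr hn
        have hpow : (n:ℂ) ^ s = (n:ℂ) ^ (s - 1) * (n:ℂ) := by
          rw [show s = (s - 1) + 1 by ring, Complex.cpow_add _ _ hn', Complex.cpow_one]
          ring_nf
        have hcz : (n:ℂ) ^ (s - 1) ≠ 0 := by
          simp [Complex.cpow_eq_zero_iff, hn']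
        rw [hpow, Pi.one_apply]
        field_simp
    rw [e1, hφeq, LSeries_convolution' hsumid hsumα, e2, e3]
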